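/- Deviation of a sequence from its weighted averages in terms of discrete total variation: let (γ_k)_{k∈ℕ} be nonnegative reals with ∑_{k=0}^∞ γ_k = 1, let ρ : ℤ → ℝ with 0 ≤ ρ_j ≤ 1 for all j, and set W_j = ∑_{k=0}^∞ γ_k ρ_{j+k}. Then ∑_{j∈ℤ} |W_j − ρ_j| ≤ (∑_{k=0}^∞ k γ_k) · ∑_{j∈ℤ} |ρ_{j+1} − ρ_j|, where the sums of nonnegative terms are valued in [0,∞]. -/

import Mathlib

open scoped ENNReal

/-- Deviation of a sequence from its weighted averages in terms of the discrete
total variation: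
`∑_j |W_j − ρ_j| ≤ (∑_k k γ_k) · ∑_j |ρ_{j+1} − ρ_j|` (sums in `[0,∞]`). -/
theorem deviation_from_weighted_averages
    (γ : ℕ → ℝ) (hγnn : ∀ k, 0 ≤ γ k) (hγsum : HasSum γ 1)
    (ρ : ℤ → ℝ) (hρ : ∀ j, ρ j ∈ Set.Icc (0:ℝ) 1)
    (W : ℤ → ℝ) (hW : ∀ j : ℤ, W j = ∑' k : ℕ, γ k * ρ (j + (k:ℤ))) :
    ∑' j : ℤ, ENNReal.ofReal |W j - ρ j| ≤
      (∑' k : ℕ, ENNReal.ofReal ((k:ℝ) * γ k)) *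
        ∑' j : ℤ, ENNReal.ofReal |ρ (j+1) - ρ j| := by
  set D : ℤ → ℝ≥0∞ := fun j => ENNReal.ofReal |ρ (j+1) - ρ j| with hD
  set T : ℝ≥0∞ := ∑' j : ℤ, D j with hT
  have hγs : Summable γ := hγsum.summable
  have hdiff1 : ∀ a b : ℤ, |ρ a - ρ b| ≤ 1 := by
    intro a b
    have ha := hρ a; have hb := hρ b
    rw [abs_le]; constructor <;> [linarith [ha.1, hb.2]; linarith [ha.2, hb.1]]
  -- summability of the difference series
  have hsum1 : ∀ j : ℤ, Summable (fun k : ℕ => γ k * (ρ (j + (k:ℤ)) - ρ j)) := by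
    intro j
    apply Summable.of_norm_bounded hγs
    intro k
    rw [Real.norm_eq_abs, abs_mul, abs_of_nonneg (hγnn k)]
    calc γ k * |ρ (j + (k:ℤ)) - ρ j| ≤ γ k * 1 :=
          mul_le_mul_of_nonneg_left (hdiff1 _ _) (hγnn k)
      _ = γ k := mul_one _
  have hsumA : ∀ j : ℤ, Summable (fun k : ℕ => γ k * ρ (j + (k:ℤ))) := by
    intro j
    apply Summable.of_norm_bounded hγs
    intro k
    rw [Real.norm_eq_abs, abs_mul, abs_of_nonneg (hγnn k),
      abs_of_nonneg (hρ _).1]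
    calc γ k * ρ (j + (k:ℤ)) ≤ γ k * 1 :=
          mul_le_mul_of_nonneg_left (hρ _).2 (hγnn k)
      _ = γ k := mul_one _
  have hWρ : ∀ j : ℤ, W j - ρ j = ∑' k : ℕ, γ k * (ρ (j + (k:ℤ)) - ρ j) := by
    intro j
    have h2 : Summable (fun k : ℕ => γ k * ρ j) := hγs.mul_right _
    rw [hW j]
    have : (∑' k : ℕ, γ k * ρ j) = 1 * ρ j := (hγsum.mul_right (ρ j)).tsum_eq
    calc (∑' k : ℕ, γ k * ρ (j + (k:ℤ))) - ρ j
        = (∑' k : ℕ, γ k * ρ (j + (k:ℤ))) - ∑' k : ℕ, γ k * ρ j := by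
          rw [this, one_mul]
      _ = ∑' k : ℕ, (γ k * ρ (j + (k:ℤ)) - γ k * ρ j) := (Summable.tsum_sub (hsumA j) h2).symm
      _ = ∑' k : ℕ, γ k * (ρ (j + (k:ℤ)) - ρ j) := by
          congr 1; funext k; ring
  -- pointwise bound in ℝ≥0∞
  have hpt : ∀ j : ℤ, ENNReal.ofReal |W j - ρ j| ≤
      ∑' k : ℕ, ENNReal.ofReal (γ k * |ρ (j + (k:ℤ)) - ρ j|) := by
    intro j
    have habs : |W j - ρ j| ≤ ∑' k : ℕ, γ k * |ρ (j + (k:ℤ)) - ρ j| := by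
      rw [hWρ j]
      have := norm_tsum_le_tsum_norm (f := fun k : ℕ => γ k * (ρ (j + (k:ℤ)) - ρ j))
        ((hsum1 j).abs)
      simpa [Real.norm_eq_abs, abs_mul, abs_of_nonneg (hγnn _)] using this
    calc ENNReal.ofReal |W j - ρ j|
        ≤ ENNReal.ofReal (∑' k : ℕ, γ k * |ρ (j + (k:ℤ)) - ρ j|) :=
          ENNReal.ofReal_le_ofReal habs
      _ = ∑' k : ℕ, ENNReal.ofReal (γ k * |ρ (j + (k:ℤ)) - ρ j|) := by
          apply ENNReal.ofReal_tsum_of_nonneg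
          · intro k; exact mul_nonneg (hγnn k) (abs_nonneg _)
          · have := (hsum1 j).abs
            simpa [abs_mul, abs_of_nonneg (hγnn _)] using this
  -- telescoping bound
  have htel : ∀ (j : ℤ) (k : ℕ), |ρ (j + (k:ℤ)) - ρ j| ≤
      ∑ i ∈ Finset.range k, |ρ (j + (i:ℤ) + 1) - ρ (j + (i:ℤ))| := by
    intro j k
    induction k with
    | zero => simp
    | succ k ih =>
      rw [Finset.sum_range_succ]
      have h1 : |ρ (j + ((k+1:ℕ):ℤ)) - ρ j| ≤
          |ρ (j + (k:ℤ) + 1) - ρ (j + (k:ℤ))| + |ρ (j + (k:ℤ)) - ρ j| := by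
        have : (((k+1:ℕ)):ℤ) = (k:ℤ) + 1 := by push_cast; ring
        rw [this, ← add_assoc]
        calc |ρ (j + (k:ℤ) + 1) - ρ j|
            = |(ρ (j + (k:ℤ) + 1) - ρ (j + (k:ℤ))) + (ρ (j + (k:ℤ)) - ρ j)| := by ring_nf
          _ ≤ _ := abs_add_le _ _
      linarith
  -- pointwise in (j,k)
  have hjk : ∀ (j : ℤ) (k : ℕ), ENNReal.ofReal (γ k * |ρ (j + (k:ℤ)) - ρ j|) ≤
      ENNReal.ofReal (γ k) * ∑ i ∈ Finset.range k, D (j + (i:ℤ)) := by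
    intro j k
    calc ENNReal.ofReal (γ k * |ρ (j + (k:ℤ)) - ρ j|)
        ≤ ENNReal.ofReal (γ k * ∑ i ∈ Finset.range k,
            |ρ (j + (i:ℤ) + 1) - ρ (j + (i:ℤ))|) :=
          ENNReal.ofReal_le_ofReal
            (mul_le_mul_of_nonneg_left (htel j k) (hγnn k))
      _ = ENNReal.ofReal (γ k) * ENNReal.ofReal (∑ i ∈ Finset.range k,
            |ρ (j + (i:ℤ) + 1) - ρ (j + (i:ℤ))|) :=
          ENNReal.ofReal_mul (hγnn k)
      _ = ENNReal.ofReal (γ k) * ∑ i ∈ Finset.range k, D (j + (i:ℤ)) := by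
          rw [ENNReal.ofReal_sum_of_nonneg (fun i _ => abs_nonneg _)]
  -- shift invariance
  have hshift : ∀ m : ℤ, (∑' j : ℤ, D (j + m)) = T := by
    intro m
    exact (Equiv.addRight m).tsum_eq D
  calc ∑' j : ℤ, ENNReal.ofReal |W j - ρ j|
      ≤ ∑' j : ℤ, ∑' k : ℕ, ENNReal.ofReal (γ k * |ρ (j + (k:ℤ)) - ρ j|) :=
        ENNReal.tsum_le_tsum hpt
    _ ≤ ∑' j : ℤ, ∑' k : ℕ, ENNReal.ofReal (γ k) * ∑ i ∈ Finset.range k, D (j + (i:ℤ)) :=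
        ENNReal.tsum_le_tsum fun j => ENNReal.tsum_le_tsum (hjk j)
    _ = ∑' k : ℕ, ∑' j : ℤ, ENNReal.ofReal (γ k) * ∑ i ∈ Finset.range k, D (j + (i:ℤ)) :=
        ENNReal.tsum_comm
    _ = ∑' k : ℕ, ENNReal.ofReal (γ k) * ((k : ℝ≥0∞) * T) := by
        congr 1; funext k
        rw [ENNReal.tsum_mul_left]
        congr 1
        rw [Summable.tsum_finsetSum (fun i _ => ENNReal.summable)]
        simp [hshift, Finset.sum_const, mul_comm]
    _ = ∑' k : ℕ, ENNReal.ofReal ((k:ℝ) * γ k) * T := by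
        congr 1; funext k
        rw [ENNReal.ofReal_mul (by positivity), ENNReal.ofReal_natCast]
        ring
    _ = (∑' k : ℕ, ENNReal.ofReal ((k:ℝ) * γ k)) * T := ENNReal.tsum_mul_right
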